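/- Let n, k be positive integers with 0 < k < n and let r be an integer with 1 ≤ r ≤ ⌊n/k⌋. If I and J are r-stable k-element subsets of [n] (i.e., every two distinct elements have circular distance at least r on the n-cycle), then the sets U(I,J) = {a₁, a₃, …, a_{2k−1}} and V(I,J) = {a₂, a₄, …, a_{2k}}, where (a₁ ≤ a₂ ≤ ⋯ ≤ a_{2k}) is the nondecreasing rearrangement of the multiset union I ∪ J, are again r-stable k-element subsets of [n]. In other words, the collection of r-stable k-subsets of [n] is sort-closed. -/

import Mathlib

/-- The circular distance between `i, j ∈ [n]`: `min (|i-j|) (n - |i-j|)`. -/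
def circDist (n i j : ℕ) : ℕ :=
  min ((i : ℤ) - j).natAbs (n - ((i : ℤ) - j).natAbs)

/-- A subset `S ⊆ [n]` is `r`-stable if every two distinct elements have
circular distance at least `r`. -/
def RStable (n r : ℕ) (S : Finset ℕ) : Prop :=
  ∀ i ∈ S, ∀ j ∈ S, i ≠ j → r ≤ circDist n i j

/-- The nondecreasing rearrangement of the multiset union of two finsets. -/
def sortUnion (I J : Finset ℕ) : List ℕ :=
  (I.val + J.val).sort (· ≤ ·)

/-- `U(I,J)`: the odd-indexed entries `a₁, a₃, …, a_{2k-1}` (list indices `0,2,…`). -/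
def sortU (k : ℕ) (I J : Finset ℕ) : Finset ℕ :=
  ((List.range k).map (fun i => (sortUnion I J).getD (2 * i) 0)).toFinset

/-- `V(I,J)`: the even-indexed entries `a₂, a₄, …, a_{2k}` (list indices `1,3,…`). -/
def sortV (k : ℕ) (I J : Finset ℕ) : Finset ℕ :=
  ((List.range k).map (fun i => (sortUnion I J).getD (2 * i + 1) 0)).toFinset

lemma countP_le_one_of_window {n r : ℕ} {S : Finset ℕ} (hS : RStable n r S)
    (p : ℕ → Prop) [DecidablePred p]
    (hp : ∀ u ∈ S, ∀ v ∈ S, u ≠ v → p u → p v → False) :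
    S.val.countP p ≤ 1 := by
  by_contra hc
  push_neg at hc
  have h2 : 1 < (S.filter p).card := by
    have : (S.filter p).card = S.val.countP p := by
      rw [Finset.card, Finset.filter_val, Multiset.countP_eq_card_filter]
    omega
  obtain ⟨u, hu, v, hv, huv⟩ := Finset.one_lt_card.mp h2
  rw [Finset.mem_filter] at hu hv
  exact hp u hu.1 v hv.1 huv hu.2 hv.2

lemma countP_sortUnion (I J : Finset ℕ) (p : ℕ → Prop) [DecidablePred p] :
    (sortUnion I J).countP (fun a => decide (p a)) = I.val.countP p + J.val.countP p := by
  have h := Multiset.sort_eq (α := ℕ) (I.val + J.val) (· ≤ ·)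
  have := congrArg (Multiset.countP p) h
  rwa [Multiset.coe_countP, Multiset.countP_add] at this

lemma part_good (n k r : ℕ) (hk : 0 < k) (hkn : k < n)
    (hr1 : 1 ≤ r) (hr2 : r ≤ n / k)
    (I J : Finset ℕ)
    (hI : I ⊆ Finset.Icc 1 n) (hJ : J ⊆ Finset.Icc 1 n)
    (hIk : I.card = k) (hJk : J.card = k)
    (hIs : RStable n r I) (hJs : RStable n r J) (c : ℕ) (hc : c ≤ 1) :
    ((List.range k).map (fun i => (sortUnion I J).getD (2 * i + c) 0)).toFinset ⊆ Finset.Icc 1 n ∧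
    (((List.range k).map (fun i => (sortUnion I J).getD (2 * i + c) 0)).toFinset.card = k) ∧
    RStable n r ((List.range k).map (fun i => (sortUnion I J).getD (2 * i + c) 0)).toFinset := by
  have hrn : r ≤ n := le_trans hr2 (Nat.div_le_self n k)
  set L := sortUnion I J with hLdef
  have hLM : (↑L : Multiset ℕ) = I.val + J.val := Multiset.sort_eq _ _
  have hlen : L.length = 2 * k := by
    have h := congrArg Multiset.card hLM
    simp only [Multiset.coe_card, Multiset.card_add] at h
    have h1 : Multiset.card I.val = k := hIk
    have h2 : Multiset.card J.val = k := hJk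
    omega
  have hsort : L.Pairwise (· ≤ ·) := Multiset.pairwise_sort _ _
  have hpair := List.pairwise_iff_getElem.mp hsort
  -- monotonicity in getD form
  have hmono : ∀ a b : ℕ, a ≤ b → b < 2 * k → L.getD a 0 ≤ L.getD b 0 := by
    intro a b hab hb
    have ha' : a < L.length := by omega
    have hb' : b < L.length := by omega
    rw [List.getD_eq_getElem L 0 ha', List.getD_eq_getElem L 0 hb']
    rcases Nat.eq_or_lt_of_le hab with h | h
    · subst h; exact le_refl _
    · exact hpair a b ha' hb' h
  -- membership
  have hmemM : ∀ m, m < 2 * k → L.getD m 0 ∈ I ∨ L.getD m 0 ∈ J := by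
    intro m hm
    have hm' : m < L.length := by omega
    rw [List.getD_eq_getElem L 0 hm']
    have : L[m] ∈ L := List.getElem_mem hm'
    have : L[m] ∈ (↑L : Multiset ℕ) := by rwa [Multiset.mem_coe]
    rw [hLM, Multiset.mem_add] at this
    exact this
  have hIcc : ∀ m, m < 2 * k → 1 ≤ L.getD m 0 ∧ L.getD m 0 ≤ n := by
    intro m hm
    rcases hmemM m hm with h | h
    · have := hI h; rw [Finset.mem_Icc] at this; exact this
    · have := hJ h; rw [Finset.mem_Icc] at this; exact this
  -- Claim 1 : gap of two indices is at least r
  have claim1 : ∀ m, m + 2 < 2 * k → L.getD m 0 + r ≤ L.getD (m + 2) 0 := by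
    intro m hm
    by_contra hcon
    push_neg at hcon
    set x := L.getD m 0 with hx
    set p : ℕ → Prop := fun a => x ≤ a ∧ a < x + r with hp
    have hwin : ∀ (S : Finset ℕ), RStable n r S → S.val.countP p ≤ 1 := by
      intro S hS
      apply countP_le_one_of_window hS
      intro u hu v hv huv pu pv
      have := hS u hu v hv huv
      simp only [circDist] at this
      simp only [hp] at pu pv
      omega
    have hup : L.countP (fun a => decide (p a)) ≤ 2 := by
      rw [countP_sortUnion]
      have h1 := hwin I hIs
      have h2 := hwin J hJs
      omega
    -- lower bound: three entries at m, m+1, m+2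
    have hlow : 3 ≤ L.countP (fun a => decide (p a)) := by
      have hsub : ((L.drop m).take 3).Sublist L :=
        (List.take_sublist _ _).trans (List.drop_sublist _ _)
      have hslen : ((L.drop m).take 3).length = 3 := by
        simp [List.length_take, List.length_drop, hlen]; omega
      have hall : ∀ a ∈ (L.drop m).take 3, (fun a => decide (p a)) a = true := by
        intro a ha
        obtain ⟨i, hi, hival⟩ := List.mem_iff_getElem.mp ha
        have hi3 : i < 3 := by omega
        have hidx : m + i < L.length := by omega
        have : ((L.drop m).take 3)[i] = L[m + i] := by
          rw [List.getElem_take, List.getElem_drop]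
        rw [this] at hival
        have e1 : L.getD m 0 ≤ L.getD (m + i) 0 := hmono m (m + i) (by omega) (by omega)
        have e2 : L.getD (m + i) 0 ≤ L.getD (m + 2) 0 := hmono (m + i) (m + 2) (by omega) (by omega)
        have e3 : L.getD (m + i) 0 = a := by
          rw [List.getD_eq_getElem L 0 hidx]; exact hival
        simp only [hp, decide_eq_true_eq]
        omega
      have : ((L.drop m).take 3).countP (fun a => decide (p a)) = 3 := by
        rw [List.countP_eq_length.mpr hall, hslen]
      calc 3 = ((L.drop m).take 3).countP (fun a => decide (p a)) := this.symm
        _ ≤ L.countP (fun a => decide (p a)) := List.Sublist.countP_le hsub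
    omega
  -- Claim 2 : wrap-around bound
  have claim2 : ∀ a b, a < b → b < 2 * k → b ≤ a + (2 * k - 2) →
      L.getD b 0 ≤ L.getD a 0 + (n - r) := by
    intro a b hab hb hbk
    by_contra hcon
    push_neg at hcon
    set x := L.getD a 0 with hx
    set y := L.getD b 0 with hy
    have hx1 : 1 ≤ x := (hIcc a (by omega)).1
    have hyn : y ≤ n := (hIcc b (by omega)).2
    set p : ℕ → Prop := fun z => z ≤ x ∨ y ≤ z with hp
    have hwin : ∀ (S : Finset ℕ), S ⊆ Finset.Icc 1 n → RStable n r S →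
        S.val.countP p ≤ 1 := by
      intro S hSI hS
      apply countP_le_one_of_window hS
      intro u hu v hv huv pu pv
      have hcd := hS u hu v hv huv
      have hu' := hSI hu
      have hv' := hSI hv
      rw [Finset.mem_Icc] at hu' hv'
      simp only [circDist] at hcd
      simp only [hp] at pu pv
      omega
    have hup : L.countP (fun a => decide (p a)) ≤ 2 := by
      rw [countP_sortUnion]
      have h1 := hwin I hI hIs
      have h2 := hwin J hJ hJs
      omega
    -- lower bound
    have hsplit : L.countP (fun z => decide (p z)) =
        (L.take b).countP (fun z => decide (p z)) + (L.drop b).countP (fun z => decide (p z)) := by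
      conv_lhs => rw [← List.take_append_drop b L]
      rw [List.countP_append]
    have hlow1 : a + 1 ≤ (L.take b).countP (fun z => decide (p z)) := by
      have hsub : (L.take (a + 1)).Sublist (L.take b) := by
        have : L.take (a + 1) = (L.take b).take (a + 1) := by
          rw [List.take_take]
          congr 1
          omega
        rw [this]
        exact List.take_sublist _ _
      have hslen : (L.take (a + 1)).length = a + 1 := by
        simp [List.length_take, hlen]; omega
      have hall : ∀ z ∈ L.take (a + 1), (fun z => decide (p z)) z = true := by
        intro z hz
        obtain ⟨i, hi, hival⟩ := List.mem_iff_getElem.mp hz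
        have hia : i ≤ a := by omega
        have hidx : i < L.length := by omega
        have : (L.take (a + 1))[i] = L[i] := List.getElem_take
        rw [this] at hival
        have e1 : L.getD i 0 ≤ x := hmono i a hia (by omega)
        have e3 : L.getD i 0 = z := by rw [List.getD_eq_getElem L 0 hidx]; exact hival
        simp only [hp, decide_eq_true_eq]
        omega
      calc a + 1 = (L.take (a + 1)).countP (fun z => decide (p z)) := by
            rw [List.countP_eq_length.mpr hall, hslen]
        _ ≤ (L.take b).countP (fun z => decide (p z)) := List.Sublist.countP_le hsub
    have hlow2 : 2 * k - b ≤ (L.drop b).countP (fun z => decide (p z)) := by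
      have hdlen : (L.drop b).length = 2 * k - b := by
        simp [List.length_drop, hlen]
      have hall : ∀ z ∈ L.drop b, (fun z => decide (p z)) z = true := by
        intro z hz
        obtain ⟨i, hi, hival⟩ := List.mem_iff_getElem.mp hz
        have hidx : b + i < L.length := by
          have := hi; rw [hdlen] at this; omega
        have : (L.drop b)[i] = L[b + i] := List.getElem_drop
        rw [this] at hival
        have e1 : y ≤ L.getD (b + i) 0 := hmono b (b + i) (by omega) (by omega)
        have e3 : L.getD (b + i) 0 = z := by rw [List.getD_eq_getElem L 0 hidx]; exact hival
        simp only [hp, decide_eq_true_eq]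
        omega
      rw [← hdlen]
      exact le_of_eq (List.countP_eq_length.mpr hall).symm
    omega
  -- gap between selected entries
  have hsel_lt : ∀ i, i < k → 2 * i + c < 2 * k := by intro i h; omega
  have hgap : ∀ i j, i < j → j < k →
      L.getD (2 * i + c) 0 + r ≤ L.getD (2 * j + c) 0 := by
    intro i j hij hj
    have h1 : L.getD (2 * i + c) 0 + r ≤ L.getD (2 * i + c + 2) 0 :=
      claim1 (2 * i + c) (by omega)
    have h2 : L.getD (2 * i + c + 2) 0 ≤ L.getD (2 * j + c) 0 :=
      hmono _ _ (by omega) (by omega)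
    omega
  have hwrap : ∀ i j, i < j → j < k →
      L.getD (2 * j + c) 0 ≤ L.getD (2 * i + c) 0 + (n - r) := by
    intro i j hij hj
    exact claim2 (2 * i + c) (2 * j + c) (by omega) (by omega) (by omega)
  have hmemT : ∀ x, x ∈ ((List.range k).map (fun i => L.getD (2 * i + c) 0)).toFinset ↔
      ∃ i, i < k ∧ L.getD (2 * i + c) 0 = x := by
    intro x
    simp [List.mem_map, List.mem_range]
  refine ⟨?_, ?_, ?_⟩
  · intro x hx
    obtain ⟨i, hik, rfl⟩ := (hmemT x).mp hx
    have := hIcc (2 * i + c) (hsel_lt i hik)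
    rw [Finset.mem_Icc]
    exact this
  · have hnd : ((List.range k).map (fun i => L.getD (2 * i + c) 0)).Nodup := by
      apply List.Nodup.map_on _ (List.nodup_range (n := k))
      intro i hi j hj hfij
      have hfij' : L.getD (2 * i + c) 0 = L.getD (2 * j + c) 0 := hfij
      rw [List.mem_range] at hi hj
      rcases lt_trichotomy i j with h | h | h
      · have := hgap i j h hj; omega
      · exact h
      · have := hgap j i h hi; omega
    rw [List.toFinset_card_of_nodup hnd]
    simp
  · intro u hu v hv huv
    obtain ⟨i, hik, rfl⟩ := (hmemT u).mp hu
    obtain ⟨j, hjk, rfl⟩ := (hmemT v).mp hv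
    have hIi := hIcc (2 * i + c) (hsel_lt i hik)
    have hIj := hIcc (2 * j + c) (hsel_lt j hjk)
    rcases lt_trichotomy i j with h | h | h
    · have h1 := hgap i j h hjk
      have h2 := hwrap i j h hjk
      simp only [circDist]
      omega
    · exact absurd (by rw [h]) huv
    · have h1 := hgap j i h hik
      have h2 := hwrap j i h hik
      simp only [circDist]
      omega

/-- The collection of `r`-stable `k`-subsets of `[n]` is sort-closed. -/
theorem rStable_sort_closed (n k r : ℕ) (hk : 0 < k) (hkn : k < n)
    (hr1 : 1 ≤ r) (hr2 : r ≤ n / k)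
    (I J : Finset ℕ)
    (hI : I ⊆ Finset.Icc 1 n) (hJ : J ⊆ Finset.Icc 1 n)
    (hIk : I.card = k) (hJk : J.card = k)
    (hIs : RStable n r I) (hJs : RStable n r J) :
    (sortU k I J ⊆ Finset.Icc 1 n ∧ (sortU k I J).card = k ∧ RStable n r (sortU k I J)) ∧
    (sortV k I J ⊆ Finset.Icc 1 n ∧ (sortV k I J).card = k ∧ RStable n r (sortV k I J)) := by
  have hU := part_good n k r hk hkn hr1 hr2 I J hI hJ hIk hJk hIs hJs 0 (by omega)
  have hV := part_good n k r hk hkn hr1 hr2 I J hI hJ hIk hJk hIs hJs 1 (le_refl 1)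
  constructor
  · simp only [Nat.add_zero] at hU
    exact hU
  · exact hV
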